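/- Let M be a weight sequence with quotients μ_k. For a positive integer n, define M^{[n]}_j := M_{nj}^{1/n}. Then M^{[n]} is a weight sequence, its quotients satisfy μ^{[n]}_j = (μ_{n(j-1)+1} ⋯ μ_{nj})^{1/n}, and there exists A ≥ 1 such that μ_{2j} ≤ A μ^{[4]}_j for all j ≥ 1. Moreover M_j ≤ M^{[n]}_j for all j, and if M has moderate growth, then sup_j (M^{[n]}_j / M_j)^{1/j} < ∞. -/

import Mathlib

open MeasureTheory Set Filter

theorem stmt_10 (μ M : ℕ → ℝ) (hμ0 : μ 0 = 1) (hμ1 : 1 ≤ μ 1)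
    (hμmono : Monotone μ) (hμtop : Tendsto μ atTop atTop)
    (hM : ∀ k, M k = ∏ i ∈ Finset.range (k + 1), μ i)
    (Mn : ℕ → ℕ → ℝ)
    (hMn : ∀ n, 0 < n → ∀ j, Mn n j = (M (n * j)) ^ (1 / (n : ℝ)))
    (μn : ℕ → ℕ → ℝ)
    (hμn : ∀ n, 0 < n → ∀ j, 1 ≤ j → μn n j = Mn n j / Mn n (j - 1)) :
    (∀ n, 0 < n → Mn n 0 = 1 ∧ 1 ≤ μn n 1 ∧
        (∀ j, 1 ≤ j → μn n j ≤ μn n (j + 1)) ∧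
        Tendsto (μn n) atTop atTop) ∧
    (∀ n, 0 < n → ∀ j, 1 ≤ j →
        μn n j = (∏ i ∈ Finset.Icc (n * (j - 1) + 1) (n * j), μ i) ^ (1 / (n : ℝ))) ∧
    (∃ A : ℝ, 1 ≤ A ∧ ∀ j, 1 ≤ j → μ (2 * j) ≤ A * μn 4 j) ∧
    (∀ n, 0 < n → ∀ j, M j ≤ Mn n j) ∧
    (∀ n, 0 < n → (∃ C : ℝ, 1 ≤ C ∧ ∀ j k, M (j + k) ≤ C ^ (j + k) * M j * M k) →
        ∃ B : ℝ, ∀ j, 1 ≤ j → (Mn n j / M j) ^ (1 / (j : ℝ)) ≤ B) := by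
  -- basic facts
  have hμge1 : ∀ i, 1 ≤ μ i := by
    intro i
    rcases Nat.eq_zero_or_pos i with h | h
    · simp [h, hμ0]
    · exact hμ1.trans (hμmono h)
  have hμpos : ∀ i, (0:ℝ) ≤ μ i := fun i => le_trans zero_le_one (hμge1 i)
  have hM0 : M 0 = 1 := by simp [hM, hμ0]
  have hMge1 : ∀ k, 1 ≤ M k := by
    intro k; rw [hM k]
    calc (1:ℝ) = ∏ _i ∈ Finset.range (k+1), (1:ℝ) := by simp
    _ ≤ ∏ i ∈ Finset.range (k+1), μ i :=
        Finset.prod_le_prod (fun i _ => zero_le_one) (fun i _ => hμge1 i)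
  have hMpos : ∀ k, (0:ℝ) < M k := fun k => lt_of_lt_of_le one_pos (hMge1 k)
  have hMratio : ∀ a b, a ≤ b → M b = M a * ∏ i ∈ Finset.Icc (a+1) b, μ i := by
    intro a b hab
    rw [hM, hM, ← Finset.Ico_add_one_right_eq_Icc, Finset.range_eq_Ico, Finset.range_eq_Ico]
    exact (Finset.prod_Ico_consecutive μ (Nat.zero_le (a+1))
      (Nat.succ_le_succ hab)).symm
  have hprodIcc : ∀ a m, ∏ i ∈ Finset.Icc (a+1) (a+m), μ i
      = ∏ i ∈ Finset.range m, μ (a+1+i) := by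
    intro a m
    rw [← Finset.Ico_add_one_right_eq_Icc, Finset.prod_Ico_eq_prod_range]
    have h : a+m+1 - (a+1) = m := by omega
    rw [h]
  have hinv : ∀ (n : ℕ), 0 < n → ∀ x : ℝ, 0 ≤ x → (x ^ n) ^ (1/(n:ℝ)) = x := by
    intro n hn x hx
    rw [← Real.rpow_natCast x n, ← Real.rpow_mul hx, mul_one_div,
      div_self (Nat.cast_ne_zero.mpr hn.ne'), Real.rpow_one]
  have hone_le_rpow : ∀ x z : ℝ, 1 ≤ x → 0 ≤ z → 1 ≤ x ^ z := by
    intro x z hx hz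
    calc (1:ℝ) = 1 ^ z := (Real.one_rpow z).symm
    _ ≤ x ^ z := Real.rpow_le_rpow zero_le_one hx hz
  have hinvn : ∀ n : ℕ, (0:ℝ) ≤ 1/(n:ℝ) := by
    intro n; positivity
  -- part 2 (key formula), proved first
  have hμn_eq : ∀ n, 0 < n → ∀ j, 1 ≤ j →
      μn n j = (∏ i ∈ Finset.Icc (n*(j-1)+1) (n*j), μ i) ^ (1/(n:ℝ)) := by
    intro n hn j hj
    have hle : n*(j-1) ≤ n*j := Nat.mul_le_mul_left n (Nat.sub_le j 1)
    have hr := hMratio (n*(j-1)) (n*j) hle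
    have hPnn : (0:ℝ) ≤ ∏ i ∈ Finset.Icc (n*(j-1)+1) (n*j), μ i :=
      Finset.prod_nonneg fun i _ => hμpos i
    rw [hμn n hn j hj, hMn n hn, hMn n hn, hr,
      Real.mul_rpow (hMpos _).le hPnn,
      mul_div_cancel_left₀ _ (ne_of_gt (Real.rpow_pos_of_pos (hMpos _) _))]
  -- range form of μn
  have hμn_range : ∀ n, 0 < n → ∀ j, 1 ≤ j →
      μn n j = (∏ i ∈ Finset.range n, μ (n*(j-1)+1+i)) ^ (1/(n:ℝ)) := by
    intro n hn j hj
    rw [hμn_eq n hn j hj]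
    congr 1
    have e : n*(j-1) + n = n*j := by
      rcases j with _ | j'
      · omega
      · simp [Nat.mul_succ]
    rw [← e]
    exact hprodIcc _ _
  -- lower bound : μ (n*(j-1)+1) ≤ μn n j
  have hμn_lb : ∀ n, 0 < n → ∀ j, 1 ≤ j → μ (n*(j-1)+1) ≤ μn n j := by
    intro n hn j hj
    rw [hμn_range n hn j hj]
    have h1 : (μ (n*(j-1)+1)) ^ n ≤ ∏ i ∈ Finset.range n, μ (n*(j-1)+1+i) := by
      have hc : (μ (n*(j-1)+1)) ^ n = ∏ _i ∈ Finset.range n, μ (n*(j-1)+1) := by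
        rw [Finset.prod_const, Finset.card_range]
      rw [hc]
      exact Finset.prod_le_prod (fun i _ => hμpos _)
        (fun i _ => hμmono (Nat.le_add_right _ _))
    calc μ (n*(j-1)+1) = ((μ (n*(j-1)+1)) ^ n) ^ (1/(n:ℝ)) :=
          (hinv n hn _ (hμpos _)).symm
    _ ≤ (∏ i ∈ Finset.range n, μ (n*(j-1)+1+i)) ^ (1/(n:ℝ)) :=
          Real.rpow_le_rpow (pow_nonneg (hμpos _) _) h1 (hinvn n)
  -- μn n j ≥ 1
  have hμn_ge1 : ∀ n, 0 < n → ∀ j, 1 ≤ j → 1 ≤ μn n j :=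
    fun n hn j hj => le_trans (hμge1 _) (hμn_lb n hn j hj)
  -- part 4 auxiliary: M a * M j ≤ M (a + j)
  have hMj_eq : ∀ j, M j = ∏ i ∈ Finset.range j, μ (1+i) := by
    intro j
    have h := hMratio 0 j (Nat.zero_le j)
    rw [hM0, one_mul] at h
    rw [h]
    have h2 := hprodIcc 0 j
    simpa using h2
  have hblock : ∀ a j, M a * M j ≤ M (a + j) := by
    intro a j
    rw [hMratio a (a+j) (Nat.le_add_right a j), hprodIcc a j, hMj_eq j]
    refine mul_le_mul_of_nonneg_left ?_ (hMpos a).le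
    exact Finset.prod_le_prod (fun i _ => hμpos _)
      (fun i _ => hμmono (by omega))
  have hpow : ∀ n j, M j ^ n ≤ M (n*j) := by
    intro n j
    induction n with
    | zero => simp [hM0]
    | succ m ih =>
        calc M j ^ (m+1) = M j ^ m * M j := pow_succ _ _
        _ ≤ M (m*j) * M j := mul_le_mul_of_nonneg_right ih (hMpos j).le
        _ ≤ M (m*j + j) := hblock _ _
        _ = M ((m+1)*j) := by rw [Nat.succ_mul]
  refine ⟨?_, fun n hn j hj => hμn_eq n hn j hj, ?_, ?_, ?_⟩
  · -- part 1
    intro n hn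
    refine ⟨?_, hμn_ge1 n hn 1 le_rfl, ?_, ?_⟩
    · rw [hMn n hn, mul_zero, hM0, Real.one_rpow]
    · intro j hj
      rw [hμn_range n hn j hj, hμn_range n hn (j+1) (by omega)]
      refine Real.rpow_le_rpow (Finset.prod_nonneg fun i _ => hμpos _) ?_ (hinvn n)
      refine Finset.prod_le_prod (fun i _ => hμpos _) (fun i _ => hμmono ?_)
      have : n*(j-1) ≤ n*(j+1-1) := Nat.mul_le_mul_left n (by omega)
      omega
    · have harg : Tendsto (fun j : ℕ => n*(j-1)+1) atTop atTop := by
        refine tendsto_atTop_mono (f := fun j : ℕ => j) (fun j => ?_) tendsto_id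
        show j ≤ n*(j-1)+1
        have := Nat.le_mul_of_pos_left (j-1) hn
        omega
      refine tendsto_atTop_mono' atTop ?_ (hμtop.comp harg)
      filter_upwards [eventually_ge_atTop 1] with j hj
      exact hμn_lb n hn j hj
  · -- part 3
    refine ⟨max 1 (μ 2), le_max_left _ _, ?_⟩
    intro j hj
    have h4 : (0:ℕ) < 4 := by norm_num
    have hlb := hμn_lb 4 h4 j hj
    have hge1 := hμn_ge1 4 h4 j hj
    rcases eq_or_lt_of_le hj with h1 | h2
    · -- j = 1
      rw [← h1]
      calc μ (2*1) = μ 2 := by norm_num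
      _ ≤ max 1 (μ 2) := le_max_right _ _
      _ = max 1 (μ 2) * 1 := (mul_one _).symm
      _ ≤ max 1 (μ 2) * μn 4 1 := by
            refine mul_le_mul_of_nonneg_left ?_ (le_trans zero_le_one (le_max_left _ _))
            rw [← h1] at hge1; exact hge1
    · -- j ≥ 2
      have hidx : 2*j ≤ 4*(j-1)+1 := by omega
      calc μ (2*j) ≤ μ (4*(j-1)+1) := hμmono hidx
      _ ≤ μn 4 j := hlb
      _ = 1 * μn 4 j := (one_mul _).symm
      _ ≤ max 1 (μ 2) * μn 4 j := by
            refine mul_le_mul_of_nonneg_right (le_max_left _ _) ?_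
            linarith
  · -- part 4
    intro n hn j
    rw [hMn n hn]
    calc M j = (M j ^ n) ^ (1/(n:ℝ)) := (hinv n hn _ (hMpos j).le).symm
    _ ≤ (M (n*j)) ^ (1/(n:ℝ)) :=
        Real.rpow_le_rpow (pow_nonneg (hMpos j).le _) (hpow n j) (hinvn n)
  · -- part 5
    rintro n hn ⟨C, hC1, hCs⟩
    have hC0 : (0:ℝ) ≤ C := le_trans zero_le_one hC1
    refine ⟨C ^ n, fun j hj => ?_⟩
    have hiter : ∀ m, M (m*j) ≤ (C^(m*j))^m * M j ^ m := by
      intro m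
      induction m with
      | zero => simp [hM0]
      | succ m ih =>
          calc M ((m+1)*j) = M (m*j + j) := by rw [Nat.succ_mul]
          _ ≤ C^(m*j+j) * M (m*j) * M j := hCs (m*j) j
          _ ≤ C^((m+1)*j) * ((C^((m+1)*j))^m * M j^m) * M j := by
              have ha : (m:ℕ)*j + j = (m+1)*j := (Nat.succ_mul m j).symm
              rw [ha]
              refine mul_le_mul_of_nonneg_right ?_ (hMpos j).le
              refine mul_le_mul_of_nonneg_left ?_ (pow_nonneg hC0 _)
              calc M (m*j) ≤ (C^(m*j))^m * M j ^ m := ih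
              _ ≤ (C^((m+1)*j))^m * M j ^ m := by
                  refine mul_le_mul_of_nonneg_right ?_ (pow_nonneg (hMpos j).le _)
                  exact pow_le_pow_left₀ (pow_nonneg hC0 _)
                    (pow_le_pow_right₀ hC1 (Nat.mul_le_mul_right j (by omega))) m
          _ = (C^((m+1)*j))^(m+1) * M j^(m+1) := by ring
    have h1 : Mn n j ≤ C^(n*j) * M j := by
      rw [hMn n hn]
      calc (M (n*j)) ^ (1/(n:ℝ)) ≤ ((C^(n*j))^n * M j ^ n) ^ (1/(n:ℝ)) :=
          Real.rpow_le_rpow (hMpos _).le (hiter n) (hinvn n)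
      _ = ((C^(n*j))^n)^(1/(n:ℝ)) * (M j ^ n)^(1/(n:ℝ)) :=
          Real.mul_rpow (pow_nonneg (pow_nonneg hC0 _) _) (pow_nonneg (hMpos j).le _)
      _ = C^(n*j) * M j := by
          rw [hinv n hn _ (pow_nonneg hC0 _), hinv n hn _ (hMpos j).le]
    have h2 : Mn n j / M j ≤ C^(n*j) := by
      rw [div_le_iff₀ (hMpos j)]
      exact h1
    have hMnnn : (0:ℝ) ≤ Mn n j := by
      rw [hMn n hn]; exact Real.rpow_nonneg (hMpos _).le _
    calc (Mn n j / M j) ^ (1/(j:ℝ)) ≤ (C^(n*j)) ^ (1/(j:ℝ)) :=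
        Real.rpow_le_rpow (div_nonneg hMnnn (hMpos j).le) h2 (hinvn j)
    _ = ((C^n)^j) ^ (1/(j:ℝ)) := by rw [← pow_mul]
    _ = C^n := hinv j hj _ (pow_nonneg hC0 _)
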